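/- Let k be a perfect field of characteristic two and m ≥ 1. Then the map (v, A) ↦ v vᵀ + A is a bijection from kᵐ × {alternating m×m matrices over k} onto the set of symmetric m×m matrices over k. Moreover it is equivariant: for any g ∈ Mat(m, k), (gv)(gv)ᵀ + g A gᵀ = g (v vᵀ + A) gᵀ. -/
import Mathlib


open Matrix

lemma sq_inj_char2 {k : Type*} [Field k] [CharP k 2] {a b : k}
    (h : a * a = b * b) : a = b := by
  have h0 : (2 : k) = 0 := by exact_mod_cast CharP.cast_eq_zero k 2
  have h2 : (a - b) * (a - b) = 0 := by
    linear_combination h + (b * b - a * b) * h0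
  exact sub_eq_zero.mp (mul_self_eq_zero.mp h2)

/-- Over a perfect field of characteristic two, `(v, A) ↦ v vᵀ + A` is a
bijection from `kᵐ × {alternating matrices}` onto the symmetric matrices, and
it is equivariant for the actions `(v, A) ↦ (gv, g A gᵀ)` and `S ↦ g S gᵀ`. -/
theorem vecMulVec_add_alt_bijOn_symm {m : ℕ} (hm : 1 ≤ m)
    {k : Type*} [Field k] [CharP k 2] [PerfectField k] :
    Set.BijOn
      (fun p : (Fin m → k) × Matrix (Fin m) (Fin m) k =>
        Matrix.vecMulVec p.1 p.1 + p.2)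
      {p | p.2ᵀ = p.2 ∧ ∀ i, p.2 i i = 0}
      {S | Sᵀ = S} ∧
    ∀ (g : Matrix (Fin m) (Fin m) k) (v : Fin m → k)
      (A : Matrix (Fin m) (Fin m) k),
      Matrix.vecMulVec (g.mulVec v) (g.mulVec v) + g * A * gᵀ =
        g * (Matrix.vecMulVec v v + A) * gᵀ := by
  haveI : Fact (Nat.Prime 2) := ⟨by norm_num⟩
  refine ⟨⟨?_, ?_, ?_⟩, ?_⟩
  · rintro ⟨v, A⟩ ⟨hA, hd⟩
    show (vecMulVec v v + A)ᵀ = _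
    rw [Matrix.transpose_add, hA]
    congr 1
    ext i j
    simp [vecMulVec, mul_comm]
  · rintro ⟨v, A⟩ ⟨hA, hd⟩ ⟨w, B⟩ ⟨hB, he⟩ h
    simp only at h
    have hv : v = w := by
      funext i
      apply sq_inj_char2 (k := k)
      have h' := congrFun (congrFun h i) i
      simp only [Matrix.add_apply, vecMulVec_apply] at h'
      rw [show A i i = 0 from hd i, show B i i = 0 from he i, add_zero, add_zero] at h'
      exact h'
    subst hv
    have : A = B := by
      have := h
      rwa [add_right_inj] at this
    simp [this]
  · rintro S hS
    set v : Fin m → k := fun i => (frobeniusEquiv k 2).symm (S i i) with hv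
    have hsq : ∀ i, v i * v i = S i i := by
      intro i
      rw [hv]
      have := frobenius_apply_frobeniusEquiv_symm k 2 (S i i)
      rwa [frobenius_def, pow_two] at this
    refine ⟨⟨v, S - vecMulVec v v⟩, ⟨?_, ?_⟩, ?_⟩
    · show (S - vecMulVec v v)ᵀ = _
      rw [Matrix.transpose_sub, hS]
      congr 1
      ext i j
      simp [vecMulVec, mul_comm]
    · intro i
      simp [vecMulVec, hsq i]
    · simp
  · intro g v A
    rw [Matrix.mul_add, Matrix.add_mul]
    congr 1
    ext i j
    simp only [vecMulVec_apply, mulVec, dotProduct, Matrix.mul_apply,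
      Matrix.transpose_apply]
    rw [Finset.sum_mul_sum]
    rw [Finset.sum_comm]
    apply Finset.sum_congr rfl
    intro a _
    rw [Finset.sum_mul]
    apply Finset.sum_congr rfl
    intro b _
    ring
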